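/- A permutation σ of {1,…,n} is stack-sortable (i.e., S(σ) = id_n) if and only if σ avoids the pattern 231, that is, there are no indices i < j < k such that σ(k) < σ(i) < σ(j). -/

import Mathlib

namespace TSP

theorem foldr_max_mem {α : Type} [LinearOrder α] (x : α) (l : List α) :
    l.foldr max x ∈ x :: l := by
  induction l with
  | nil => simp
  | cons a t ih =>
    simp only [List.foldr_cons]
    rcases max_choice a (t.foldr max x) with h | h <;> rw [h]
    · simp
    · rcases List.mem_cons.mp ih with h' | h'
      · rw [h']; simp
      · exact List.mem_cons.mpr (Or.inr (List.mem_cons.mpr (Or.inr h')))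

theorem length_takeWhile_lt {α : Type} [DecidableEq α] {m : α} {l : List α}
    (h : m ∈ l) : (l.takeWhile (· ≠ m)).length < l.length := by
  have hd : l.dropWhile (· ≠ m) ≠ [] := by
    intro hnil
    have := List.dropWhile_eq_nil_iff.mp hnil m h
    simp at this
  have hsum : (l.takeWhile (· ≠ m)).length + (l.dropWhile (· ≠ m)).length = l.length := by
    rw [← List.length_append, List.takeWhile_append_dropWhile]
  have : 0 < (l.dropWhile (· ≠ m)).length := List.length_pos_iff.mpr hd
  omega

theorem length_tail_dropWhile_lt {α : Type} [DecidableEq α] {m : α} {l : List α}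
    (h : l ≠ []) : ((l.dropWhile (· ≠ m)).tail).length < l.length := by
  have hsum : (l.takeWhile (· ≠ m)).length + (l.dropWhile (· ≠ m)).length = l.length := by
    rw [← List.length_append, List.takeWhile_append_dropWhile]
  have h2 : ((l.dropWhile (· ≠ m)).tail).length = (l.dropWhile (· ≠ m)).length - 1 :=
    List.length_tail
  have : 0 < l.length := List.length_pos_iff.mpr h
  omega

/-- The stack-sorting operator `S`: `S(ε) = ε`, and if `A` is nonempty with
largest element `m` and `A = A_L · (m) · A_R`, then `S(A) = S(A_L) · S(A_R) · (m)`. -/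
def S {α : Type} [LinearOrder α] : List α → List α
  | [] => []
  | x :: l =>
    let m := l.foldr max x
    S ((x :: l).takeWhile (· ≠ m)) ++ S (((x :: l).dropWhile (· ≠ m)).tail) ++ [m]
termination_by l => l.length
decreasing_by
  · exact length_takeWhile_lt (by first | (rw [List.foldr_attach]; exact foldr_max_mem x l) | simpa using foldr_max_mem x l)
  · exact length_tail_dropWhile_lt (by simp)

/-- The identity permutation `id_n = (1, 2, …, n)` as a list. -/
def idPerm (n : ℕ) : List ℕ := List.range' 1 n

/-- `l` is a permutation of `{1, …, n}` (viewed as a sequence). -/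
def IsPermOf (n : ℕ) (l : List ℕ) : Prop := l.Perm (idPerm n)

/-- `l` is a two-stack sortable permutation (of `{1, …, len l}`). -/
def Is2SS (l : List ℕ) : Prop := IsPermOf l.length l ∧ S (S l) = idPerm l.length

/-- `σ^{+k}`: add `k` to every entry. -/
def shift (k : ℕ) (l : List ℕ) : List ℕ := l.map (· + k)

/-- `σ^{+(k1,m,k2)}`: add `k1` to every entry strictly smaller than `m`, `k2` to the others. -/
def shift3 (k1 m k2 : ℕ) (l : List ℕ) : List ℕ :=
  l.map (fun a => if a < m then a + k1 else a + k2)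

/-- Standardization `P(A)`: the permutation of `{1,…,len A}` in the same relative order. -/
def stand (l : List ℕ) : List ℕ := l.map (fun a => (l.filter (fun b => b ≤ a)).length)

/-- Avoidance of the pattern 231: no positions `i < j < k` with `l(k) < l(i) < l(j)`. -/
def Avoids231 (l : List ℕ) : Prop :=
  ¬ ∃ i j k, i < j ∧ j < k ∧ k < l.length ∧
      l.getD k 0 < l.getD i 0 ∧ l.getD i 0 < l.getD j 0

/-- The list of values of the left-to-right maxima of `l`, in order. -/
def lrMaxima (l : List ℕ) : List ℕ :=
  ((List.range l.length).filter
    (fun i => (l.take i).all (fun b => b < l.getD i 0))).map (fun i => l.getD i 0)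

/-- `lmax`: the number of left-to-right maxima. -/
def lmax (l : List ℕ) : ℕ :=
  (List.range l.length).countP (fun i => (l.take i).all (fun b => b < l.getD i 0))

/-- `rmax`: the number of right-to-left maxima. -/
def rmax (l : List ℕ) : ℕ :=
  (List.range l.length).countP (fun i => (l.drop (i+1)).all (fun b => b < l.getD i 0))

/-- `asc`: the number of ascents. -/
def asc (l : List ℕ) : ℕ :=
  (List.range (l.length - 1)).countP (fun i => l.getD i 0 < l.getD (i+1) 0)

/-- `des`: the number of descents. -/
def des (l : List ℕ) : ℕ :=
  (List.range (l.length - 1)).countP (fun i => l.getD (i+1) 0 < l.getD i 0)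

/-- `slmax(π)`: the number of left-to-right maxima of `S(π)`. -/
def slmax (l : List ℕ) : ℕ := lmax (S l)

/-- `sldes(π)`: the number of entries `a` that precede `a - 1` in `S(π)`. -/
def sldes (l : List ℕ) : ℕ :=
  (List.range (S l).length).countP
    (fun i => ((S l).drop (i+1)).any (fun b => b + 1 = (S l).getD i 0))

/-- The construction `C1(π1, π2) = π1 · (k+ℓ+1) · π2^{+k}`. -/
def C1 (p1 p2 : List ℕ) : List ℕ :=
  p1 ++ (p1.length + p2.length + 1) :: shift p1.length p2

/-- The `i`-th left-to-right maximum `a_i` of `S(π2)` (1-indexed). -/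
def lrm (p2 : List ℕ) (i : ℕ) : ℕ := (lrMaxima (S p2)).getD (i - 1) 0

/-- The construction `C2(π1, π2, i) = π1^{+(0,k,a_i)} · (k+ℓ+1) · π2^{+(k-1,a_i+1,k)}`. -/
def C2 (p1 p2 : List ℕ) (i : ℕ) : List ℕ :=
  shift3 0 p1.length (lrm p2 i) p1 ++
    (p1.length + p2.length + 1) :: shift3 (p1.length - 1) (lrm p2 i + 1) p1.length p2

/-- The decomposition `D(π) = (P(π_ℓ), P(π_r))`, where `π = π_ℓ · (n) · π_r`
with `n` the largest entry of `π`. -/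
def D (l : List ℕ) : List ℕ × List ℕ :=
  match l with
  | [] => ([], [])
  | x :: t =>
    let m := t.foldr max x
    (stand ((x :: t).takeWhile (· ≠ m)), stand (((x :: t).dropWhile (· ≠ m)).tail))

/-! ### Auxiliary lemmas for Statement 0 -/

theorem S_cons (x : ℕ) (t : List ℕ) :
    S (x :: t) = S ((x :: t).takeWhile (· ≠ t.foldr max x))
      ++ S (((x :: t).dropWhile (· ≠ t.foldr max x)).tail) ++ [t.foldr max x] := by
  rw [S]

theorem init_le_foldr_max (x : ℕ) (t : List ℕ) : x ≤ t.foldr max x := by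
  induction t with
  | nil => exact le_rfl
  | cons b t ih => exact le_trans ih (le_max_right _ _)

theorem le_foldr_max {x a : ℕ} {t : List ℕ} (h : a ∈ x :: t) : a ≤ t.foldr max x := by
  induction t with
  | nil =>
    simp only [List.mem_singleton] at h
    subst h; exact le_rfl
  | cons b t ih =>
    rcases List.mem_cons.mp h with rfl | h
    · exact le_trans (init_le_foldr_max a t) (le_max_right _ _)
    · rcases List.mem_cons.mp h with rfl | h
      · exact le_max_left _ _
      · exact le_trans (ih (List.mem_cons.mpr (Or.inr h))) (le_max_right _ _)

theorem decomp {m : ℕ} {l : List ℕ} (h : m ∈ l) :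
    l.takeWhile (· ≠ m) ++ m :: (l.dropWhile (· ≠ m)).tail = l := by
  have hd : l.dropWhile (· ≠ m) ≠ [] := by
    intro hnil
    have := List.dropWhile_eq_nil_iff.mp hnil m h
    simp at this
  have hhead : (l.dropWhile (· ≠ m)).head hd = m := by
    have := List.head_dropWhile_not (· ≠ m) hd
    simpa using this
  have h2 := List.cons_head_tail hd
  rw [hhead] at h2
  rw [h2, List.takeWhile_append_dropWhile]

theorem S_perm_aux : ∀ (n : ℕ) (l : List ℕ), l.length ≤ n → (S l).Perm l := by
  intro n
  induction n with
  | zero =>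
    intro l hl
    have : l = [] := List.eq_nil_of_length_eq_zero (by omega)
    subst this; rw [S]
  | succ n ih =>
    intro l hl
    match l with
    | [] => rw [S]
    | x :: t =>
      have hmem := foldr_max_mem x t
      have hlen1 : ((x :: t).takeWhile (· ≠ t.foldr max x)).length ≤ n := by
        have := length_takeWhile_lt (m := t.foldr max x) (l := x :: t) hmem
        simp only [List.length_cons] at this hl; omega
      have hlen2 : (((x :: t).dropWhile (· ≠ t.foldr max x)).tail).length ≤ n := by
        have := length_tail_dropWhile_lt (m := t.foldr max x) (l := x :: t) (by simp)
        simp only [List.length_cons] at this hl; omega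
      have h1 := ih _ hlen1
      have h2 := ih _ hlen2
      rw [S_cons]
      have key : (S ((x :: t).takeWhile (· ≠ t.foldr max x))
          ++ S (((x :: t).dropWhile (· ≠ t.foldr max x)).tail) ++ [t.foldr max x]).Perm
          ((x :: t).takeWhile (· ≠ t.foldr max x)
            ++ t.foldr max x :: ((x :: t).dropWhile (· ≠ t.foldr max x)).tail) := by
        rw [List.append_assoc]
        refine h1.append ?_
        refine List.Perm.trans (h2.append (List.Perm.refl [t.foldr max x])) ?_
        exact List.perm_append_comm
      exact key.trans (by rw [decomp hmem])

theorem S_perm (l : List ℕ) : (S l).Perm l := S_perm_aux l.length l le_rfl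

/-- `l` contains the pattern 231, stated via sublists. -/
def Pat231 (l : List ℕ) : Prop := ∃ a b c, [a, b, c].Sublist l ∧ c < a ∧ a < b

theorem pat231_split {L R : List ℕ} {m : ℕ} (hmL : ∀ a ∈ L, a < m) (hmR : ∀ a ∈ R, a < m) :
    Pat231 (L ++ m :: R) ↔ Pat231 L ∨ Pat231 R ∨ ∃ a ∈ L, ∃ b ∈ R, b < a := by
  constructor
  · rintro ⟨a, b, c, hsub, hca, hab⟩
    rw [List.sublist_append_iff] at hsub
    obtain ⟨u, v, huv, huL, hvR⟩ := hsub
    rcases u with _ | ⟨a', u⟩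
    · -- u = [], v = [a,b,c] <+ m :: R
      simp only [List.nil_append] at huv; subst huv
      rcases List.sublist_cons_iff.mp hvR with h | ⟨r, hr, hrt⟩
      · exact Or.inr (Or.inl ⟨a, b, c, h, hca, hab⟩)
      · obtain ⟨rfl, rfl⟩ : a = m ∧ r = [b, c] := by
          have := List.cons_eq_cons.mp hr
          exact ⟨this.1, this.2.symm⟩
        have hb : b ∈ R := hrt.subset (by simp)
        exact absurd (hmR b hb) (by omega)
    rcases u with _ | ⟨b', u⟩
    · -- u = [a], v = [b, c] <+ m :: R
      simp only [List.cons_append, List.nil_append, List.cons.injEq] at huv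
      obtain ⟨rfl, rfl⟩ := huv
      have haL : a ∈ L := huL.subset (by simp)
      have hc : c ∈ R := by
        rcases List.sublist_cons_iff.mp hvR with h | ⟨r, hr, hrt⟩
        · exact h.subset (by simp)
        · obtain ⟨rfl, rfl⟩ : b = m ∧ r = [c] := by
            have := List.cons_eq_cons.mp hr
            exact ⟨this.1, this.2.symm⟩
          exact hrt.subset (by simp)
      exact Or.inr (Or.inr ⟨a, haL, c, hc, hca⟩)
    rcases u with _ | ⟨c', u⟩
    · -- u = [a, b], v = [c] <+ m :: R
      simp only [List.cons_append, List.nil_append, List.cons.injEq] at huv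
      obtain ⟨rfl, rfl, rfl⟩ := huv
      have haL : a ∈ L := huL.subset (by simp)
      have hc : c ∈ m :: R := hvR.subset (by simp)
      rcases List.mem_cons.mp hc with rfl | hc
      · exact absurd (hmL a haL) (by omega)
      · exact Or.inr (Or.inr ⟨a, haL, c, hc, hca⟩)
    · -- u = a' :: b' :: c' :: u
      simp only [List.cons_append, List.cons.injEq] at huv
      obtain ⟨rfl, rfl, rfl, hnil⟩ := huv
      obtain ⟨rfl, rfl⟩ : u = [] ∧ v = [] := by
        have := congrArg List.length hnil
        simp only [List.length_nil, List.length_append] at this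
        exact ⟨List.eq_nil_of_length_eq_zero (by omega),
          List.eq_nil_of_length_eq_zero (by omega)⟩
      exact Or.inl ⟨a, b, c, by simpa using huL, hca, hab⟩
  · rintro (⟨a, b, c, hsub, hca, hab⟩ | ⟨a, b, c, hsub, hca, hab⟩ | ⟨a, ha, b, hb, hba⟩)
    · exact ⟨a, b, c, hsub.trans (List.sublist_append_left _ _), hca, hab⟩
    · exact ⟨a, b, c, hsub.trans ((List.sublist_cons_self m R).trans
        (List.sublist_append_right _ _)), hca, hab⟩
    · refine ⟨a, m, b, ?_, hba, hmL a ha⟩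
      show ([a] ++ m :: [b]).Sublist (L ++ m :: R)
      exact (List.singleton_sublist.mpr ha).append
        (List.Sublist.cons₂ m (List.singleton_sublist.mpr hb))

theorem sorted_core {L R : List ℕ} {m : ℕ}
    (hmL : ∀ a ∈ L, a < m) (hmR : ∀ a ∈ R, a < m)
    (hdisj : ∀ a ∈ L, a ∉ R)
    (ihL : (S L).Pairwise (· < ·) ↔ ¬ Pat231 L)
    (ihR : (S R).Pairwise (· < ·) ↔ ¬ Pat231 R) :
    (S L ++ S R ++ [m]).Pairwise (· < ·) ↔ ¬ Pat231 (L ++ m :: R) := by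
  have hpL := S_perm L
  have hpR := S_perm R
  rw [pat231_split hmL hmR]
  constructor
  · intro hs
    rw [List.pairwise_append, List.pairwise_append] at hs
    obtain ⟨⟨hsL, hsR, hLR⟩, -, -⟩ := hs
    push_neg
    refine ⟨ihL.mp hsL, ihR.mp hsR, ?_⟩
    intro a ha b hb
    exact (hLR a (hpL.mem_iff.mpr ha) b (hpR.mem_iff.mpr hb)).le
  · intro hnp
    push_neg at hnp
    obtain ⟨hnL, hnR, hcross⟩ := hnp
    rw [List.pairwise_append, List.pairwise_append]
    refine ⟨⟨ihL.mpr hnL, ihR.mpr hnR, ?_⟩, List.pairwise_singleton _ _, ?_⟩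
    · intro a ha b hb
      have haL : a ∈ L := hpL.mem_iff.mp ha
      have hbR : b ∈ R := hpR.mem_iff.mp hb
      have hne : a ≠ b := by
        intro h
        exact hdisj a haL (h ▸ hbR)
      have := hcross a haL b hbR
      omega
    · intro a ha b hb
      rcases List.mem_append.mp ha with h | h
      · rw [List.mem_singleton.mp hb]; exact hmL a (hpL.mem_iff.mp h)
      · rw [List.mem_singleton.mp hb]; exact hmR a (hpR.mem_iff.mp h)

theorem sorted_S_aux : ∀ (n : ℕ) (l : List ℕ), l.length ≤ n → l.Nodup →
    ((S l).Pairwise (· < ·) ↔ ¬ Pat231 l) := by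
  intro n
  induction n with
  | zero =>
    intro l hl _
    have : l = [] := List.eq_nil_of_length_eq_zero (by omega)
    subst this
    rw [S]
    simp only [List.Pairwise.nil, true_iff]
    rintro ⟨a, b, c, hsub, -, -⟩
    simpa using hsub.length_le
  | succ n ih =>
    intro l hl hnd
    match l with
    | [] =>
      rw [S]
      simp only [List.Pairwise.nil, true_iff]
      rintro ⟨a, b, c, hsub, -, -⟩
      simpa using hsub.length_le
    | x :: t =>
      have hmem := foldr_max_mem x t
      have hdec := decomp (m := t.foldr max x) (l := x :: t) hmem
      have hlen1 : ((x :: t).takeWhile (· ≠ t.foldr max x)).length ≤ n := by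
        have := length_takeWhile_lt (m := t.foldr max x) (l := x :: t) hmem
        simp only [List.length_cons] at this hl; omega
      have hlen2 : (((x :: t).dropWhile (· ≠ t.foldr max x)).tail).length ≤ n := by
        have := length_tail_dropWhile_lt (m := t.foldr max x) (l := x :: t) (by simp)
        simp only [List.length_cons] at this hl; omega
      -- nodup facts
      have hnd' : ((x :: t).takeWhile (· ≠ t.foldr max x)
          ++ t.foldr max x :: ((x :: t).dropWhile (· ≠ t.foldr max x)).tail).Nodup := by
        rw [hdec]; exact hnd
      rw [List.nodup_append] at hnd'
      obtain ⟨hLnd, hmRnd, hdisj⟩ := hnd'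
      have hRnd := (List.nodup_cons.mp hmRnd).2
      have hmnotR := (List.nodup_cons.mp hmRnd).1
      have hle : ∀ a ∈ x :: t, a ≤ t.foldr max x := fun a ha => le_foldr_max ha
      have hmLlt : ∀ a ∈ (x :: t).takeWhile (· ≠ t.foldr max x), a < t.foldr max x := by
        intro a ha
        have h1 : a ≤ t.foldr max x := hle a (by rw [← hdec]; exact List.mem_append.mpr (Or.inl ha))
        have h2 : a ≠ t.foldr max x := by
          intro h
          exact hdisj _ ha _ List.mem_cons_self h
        omega
      have hmRlt : ∀ a ∈ ((x :: t).dropWhile (· ≠ t.foldr max x)).tail, a < t.foldr max x := by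
        intro a ha
        have h1 : a ≤ t.foldr max x := hle a
          (by rw [← hdec]; exact List.mem_append.mpr (Or.inr (List.mem_cons.mpr (Or.inr ha))))
        have h2 : a ≠ t.foldr max x := fun h => hmnotR (h ▸ ha)
        omega
      have hdisj' : ∀ a ∈ (x :: t).takeWhile (· ≠ t.foldr max x),
          a ∉ ((x :: t).dropWhile (· ≠ t.foldr max x)).tail := by
        intro a ha hb
        exact hdisj _ ha _ (List.mem_cons.mpr (Or.inr hb)) rfl
      have key := sorted_core hmLlt hmRlt hdisj' (ih _ hlen1 hLnd) (ih _ hlen2 hRnd)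
      rw [hdec] at key
      rw [S_cons]
      exact key

theorem sorted_S_iff (l : List ℕ) (hnd : l.Nodup) :
    ((S l).Pairwise (· < ·) ↔ ¬ Pat231 l) := sorted_S_aux l.length l le_rfl hnd

theorem mem_drop_of_lt {l : List ℕ} {i j : ℕ} (hij : i < j) (hj : j < l.length) :
    l[j] ∈ l.drop (i + 1) := by
  have hlen : j - (i + 1) < (l.drop (i + 1)).length := by
    rw [List.length_drop]; omega
  have heq : (l.drop (i + 1))[j - (i + 1)] = l[j] := by
    rw [List.getElem_drop]; congr 1; omega
  exact heq ▸ List.getElem_mem hlen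

theorem sublist3 {l : List ℕ} {i j k : ℕ} (hij : i < j) (hjk : j < k) (hk : k < l.length) :
    [l[i], l[j], l[k]].Sublist l := by
  have hj : j < l.length := hjk.trans hk
  have hi : i < l.length := hij.trans hj
  have s1 : [l[k]].Sublist (l.drop (j + 1)) := List.singleton_sublist.mpr (mem_drop_of_lt hjk hk)
  have s2 : [l[j], l[k]].Sublist (l.drop j) := by
    rw [← List.getElem_cons_drop hj]
    exact s1.cons₂ _
  have s3 : (l.drop j).Sublist (l.drop (i + 1)) := by
    have h : l.drop j = (l.drop (i + 1)).drop (j - (i + 1)) := by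
      rw [List.drop_drop]; congr 1; omega
    rw [h]
    exact List.drop_sublist _ _
  have s4 : [l[i], l[j], l[k]].Sublist (l.drop i) := by
    rw [← List.getElem_cons_drop hi]
    exact (s2.trans s3).cons₂ _
  exact s4.trans (List.drop_sublist _ _)

theorem sublist_pair {b c : ℕ} : ∀ {l : List ℕ}, [b, c].Sublist l →
    ∃ j k, j < k ∧ k < l.length ∧ l.getD j 0 = b ∧ l.getD k 0 = c := by
  intro l
  induction l with
  | nil => intro h; simpa using h.length_le
  | cons x t ih =>
    intro h
    rcases List.sublist_cons_iff.mp h with h' | ⟨r, hr, hrt⟩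
    · obtain ⟨j, k, hjk, hk, hb, hc⟩ := ih h'
      exact ⟨j + 1, k + 1, by omega, by simp; omega,
        by simpa [List.getD_cons_succ] using hb, by simpa [List.getD_cons_succ] using hc⟩
    · obtain ⟨rfl, rfl⟩ : b = x ∧ r = [c] := by
        constructor <;> [exact (List.cons_eq_cons.mp hr).1; exact (List.cons_eq_cons.mp hr).2.symm]
      have hc : c ∈ t := hrt.subset (by simp)
      obtain ⟨k, hk, hck⟩ := List.getElem_of_mem hc
      refine ⟨0, k + 1, by omega, by simp; omega, rfl, ?_⟩
      rw [List.getD_cons_succ, List.getD_eq_getElem _ _ hk, hck]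

theorem sublist_triple {a b c : ℕ} {l : List ℕ} (h : [a, b, c].Sublist l) :
    ∃ i j k, i < j ∧ j < k ∧ k < l.length ∧
      l.getD i 0 = a ∧ l.getD j 0 = b ∧ l.getD k 0 = c := by
  induction l with
  | nil => simpa using h.length_le
  | cons x t ih =>
    rcases List.sublist_cons_iff.mp h with h' | ⟨r, hr, hrt⟩
    · obtain ⟨i, j, k, hij, hjk, hk, ha, hb, hc⟩ := ih h'
      exact ⟨i + 1, j + 1, k + 1, by omega, by omega, by simp; omega,
        by simpa [List.getD_cons_succ] using ha, by simpa [List.getD_cons_succ] using hb,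
        by simpa [List.getD_cons_succ] using hc⟩
    · obtain ⟨rfl, rfl⟩ : a = x ∧ r = [b, c] := by
        constructor <;> [exact (List.cons_eq_cons.mp hr).1; exact (List.cons_eq_cons.mp hr).2.symm]
      obtain ⟨j, k, hjk, hk, hb, hc⟩ := sublist_pair hrt
      refine ⟨0, j + 1, k + 1, by omega, by omega, by simp; omega, rfl, ?_, ?_⟩
      · rw [List.getD_cons_succ]; exact hb
      · rw [List.getD_cons_succ]; exact hc

theorem avoids231_iff_not_pat231 (l : List ℕ) : Avoids231 l ↔ ¬ Pat231 l := by
  constructor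
  · rintro hA ⟨a, b, c, hsub, hca, hab⟩
    obtain ⟨i, j, k, hij, hjk, hk, ha, hb, hc⟩ := sublist_triple hsub
    exact hA ⟨i, j, k, hij, hjk, hk, by rw [ha, hc]; exact hca, by rw [ha, hb]; exact hab⟩
  · rintro hP ⟨i, j, k, hij, hjk, hk, h1, h2⟩
    have hj : j < l.length := hjk.trans hk
    have hi : i < l.length := hij.trans hj
    apply hP
    refine ⟨l[i], l[j], l[k], sublist3 hij hjk hk, ?_, ?_⟩
    · rwa [List.getD_eq_getElem _ _ hk, List.getD_eq_getElem _ _ hi] at h1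
    · rwa [List.getD_eq_getElem _ _ hi, List.getD_eq_getElem _ _ hj] at h2

/-- A permutation `σ` of `{1,…,n}` is stack-sortable (i.e. `S(σ) = id_n`)
if and only if `σ` avoids the pattern 231. -/
theorem stackSortable_iff_avoids231 (n : ℕ) (σ : List ℕ) (hσ : IsPermOf n σ) :
    S σ = idPerm n ↔ Avoids231 σ := by
  have hnd : σ.Nodup := hσ.nodup_iff.mpr (List.nodup_range' (s := 1) (n := n))
  have hsortedId : (idPerm n).Pairwise (· < ·) := List.pairwise_lt_range' (s := 1) (n := n)
  haveI : IsAntisymm ℕ (· < ·) := ⟨fun a b h1 h2 => absurd h1 (not_lt.mpr h2.le)⟩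
  rw [avoids231_iff_not_pat231, ← sorted_S_iff σ hnd]
  constructor
  · intro h; rw [h]; exact hsortedId
  · intro hs
    exact List.Perm.eq_of_pairwise (fun a b _ _ h1 h2 => absurd h1 (not_lt.mpr h2.le)) hs hsortedId ((S_perm σ).trans hσ)

end TSP
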